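/- arXiv:2402.10112 — 2 statements merged into one kernel-verified Lean document; each statement's English description precedes it below -/
import Mathlib

section
/- Let G be a group acting non-singularly on a measure space (X, 𝓕, μ), let K ⊆ G be finite, symmetric, and contain the identity, and let 𝒯 be a finite family of finite subsets of G. Suppose for each T ∈ 𝒯 a measurable T-set W_T is given such that μ(T₁W_{T₁} ∩ T₂W_{T₂}) = 0 for distinct T₁, T₂ ∈ 𝒯. Then for every T ∈ 𝒯, every g ∈ ∂_K T \ T, every S ∈ 𝒯, and every s ∈ int_K S = S \ ∂_K S, one has μ(gW_T ∩ sW_S) = 0; in other words, gW_T is contained, up to a null set, in the complement of ⋃_{S∈𝒯}(int_K S)W_S. -/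
open MeasureTheory
open scoped Pointwise ENNReal

/-- The *`K`-boundary* of `H`: the set of `g ∈ G` such that `Kg` meets both `H` and its
complement. -/
def kBoundary {G : Type*} [Group G] (K H : Set G) : Set G :=
  {g : G | (∃ k ∈ K, k * g ∈ H) ∧ ∃ k ∈ K, k * g ∉ H}

/-- A measurable action is *non-singular* if each group element acts measurably and
preserves nullity of measurable sets. -/
def NonSingularAction (G : Type*) {X : Type*} [Group G] [MulAction G X] [MeasurableSpace X]
    (μ : Measure X) : Prop :=
  (∀ g : G, Measurable fun x : X => g • x) ∧
  ∀ (g : G) (A : Set X), MeasurableSet A → (μ A = 0 ↔ μ (g⁻¹ • A) = 0)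

/-- A set `W` is an *`H`-set* if its images under distinct elements of `H` are almost
disjoint. -/
def IsHSet {G X : Type*} [Group G] [MulAction G X] [MeasurableSpace X]
    (μ : Measure X) (H : Set G) (W : Set X) : Prop :=
  ∀ h ∈ H, ∀ h' ∈ H, h ≠ h' → μ ((h • W) ∩ (h' • W)) = 0

/-- if the towers `T • W_T`, `T ∈ 𝒯`, are pairwise almost disjoint and each
`W_T` is a `T`-set, then for `g` in the outside `K`-boundary of `T`, the image `g • W_T` is
almost disjoint from every `s • W_S` with `s` in the `K`-interior of `S`. -/
theorem boundary_image_almost_disjoint_interior {G X : Type*} [Group G] [MulAction G X]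
    [MeasurableSpace X] (μ : Measure X) (hns : NonSingularAction G μ)
    (K : Finset G) (hKsymm : ∀ k ∈ K, k⁻¹ ∈ K) (hKone : (1 : G) ∈ K)
    (𝒯 : Finset (Finset G)) (W : Finset G → Set X)
    (hWmeas : ∀ T ∈ 𝒯, MeasurableSet (W T))
    (hWT : ∀ T ∈ 𝒯, IsHSet μ (T : Set G) (W T))
    (hdisj : ∀ T₁ ∈ 𝒯, ∀ T₂ ∈ 𝒯, T₁ ≠ T₂ →
      μ ((⋃ t ∈ T₁, t • W T₁) ∩ ⋃ t ∈ T₂, t • W T₂) = 0) :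
    ∀ T ∈ 𝒯, ∀ g ∈ kBoundary (K : Set G) (T : Set G) \ (T : Set G),
      ∀ S ∈ 𝒯, ∀ s ∈ (S : Set G) \ kBoundary (K : Set G) (S : Set G),
        μ ((g • W T) ∩ (s • W S)) = 0 := by
  intro T hT g hg S hS s hs
  obtain ⟨⟨⟨k, hk, hkg⟩, -⟩, hgT⟩ := hg
  obtain ⟨hsS, hsnb⟩ := hs
  have hks : k * s ∈ (S : Set G) := by
    by_contra h
    exact hsnb ⟨⟨1, hKone, by simpa using hsS⟩, ⟨k, hk, h⟩⟩
  have hsmulmeas : ∀ (a : G) (T : Finset G), T ∈ 𝒯 → MeasurableSet (a • W T) := by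
    intro a T hT
    have h := (hns.1 a⁻¹) (hWmeas T hT)
    rwa [Set.preimage_smul, inv_inv] at h
  set A : Set X := ((k * g) • W T) ∩ ((k * s) • W S) with hA
  have hAmeas : MeasurableSet A :=
    (hsmulmeas (k*g) T hT).inter (hsmulmeas (k*s) S hS)
  have hA0 : μ A = 0 := by
    by_cases hST : S = T
    · subst hST
      have hne : k * g ≠ k * s := by
        intro h
        exact hgT (by simpa [mul_left_cancel h] using hsS)
      exact hWT S hS (k*g) hkg (k*s) hks hne
    · have hsub : A ⊆ (⋃ t ∈ T, t • W T) ∩ ⋃ t ∈ S, t • W S := by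
        apply Set.inter_subset_inter
        · exact Set.subset_biUnion_of_mem (u := fun t => t • W T) hkg
        · exact Set.subset_biUnion_of_mem (u := fun t => t • W S) hks
      exact le_antisymm (le_trans (measure_mono hsub) (le_of_eq (hdisj T hT S hS (Ne.symm hST)))) (zero_le)
  have := (hns.2 k A hAmeas).mp hA0
  have hrw : k⁻¹ • A = (g • W T) ∩ (s • W S) := by
    rw [hA, Set.smul_set_inter, smul_smul, smul_smul, inv_mul_cancel_left, inv_mul_cancel_left]
  rwa [hrw] at this
end

section
/- Let G be a countable group acting non-singularly on a probability space (X, 𝓕, μ), with each fixed-point set {x ∈ X : gx = x} (g ∈ G) measurable. Suppose that for every finite K ⊆ G and every δ > 0 there exists a tiling family for G all of whose shapes are (K, δ)-invariant, and suppose that for all 0 < ε < 1, all 0 < δ < ε³/250, every finite symmetric K ⊆ G containing the identity, and every tiling family 𝒯 for G with (K, δ)-invariant shapes, there exist T-sets W_T ⊆ X (T ∈ 𝒯) satisfying: (1) μ(T₁W_{T₁} ∩ T₂W_{T₂}) = 0 for distinct T₁, T₂ ∈ 𝒯; (2) μ(⋃_{T∈𝒯} TW_T) > 1 − ε; (3)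 ∑_{T∈𝒯} μ((∂_K T)W_T) < ε. Then the action of G on X is pointwise free. -/
open MeasureTheory
open scoped Pointwise ENNReal

/-- A finite set `H ⊆ G` is *`(K, ε)`-invariant* if its `K`-boundary has fewer than `ε * |H|`
elements. -/
def KInvariant {G : Type*} [Group G] (K : Finset G) (ε : ℝ) (H : Finset G) : Prop :=
  ((kBoundary (K : Set G) (H : Set G)).ncard : ℝ) < ε * H.card

/-- A finite family `𝒯` of finite subsets of `G` is a *tiling family* if there are centre sets
`C T` (for `T ∈ 𝒯`) such that the translates `Tc`, `c ∈ C T`, `T ∈ 𝒯`, partition `G`. -/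
def IsTilingFamily {G : Type*} [Group G] (𝒯 : Finset (Finset G)) (C : Finset G → Set G) :
    Prop :=
  (∀ T ∈ 𝒯, ∀ c ∈ C T, ∀ T' ∈ 𝒯, ∀ c' ∈ C T', (T, c) ≠ (T', c') →
    Disjoint ((fun t => t * c) '' (T : Set G)) ((fun t => t * c') '' (T' : Set G))) ∧
  (⋃ T ∈ 𝒯, ⋃ c ∈ C T, (fun t => t * c) '' (T : Set G)) = Set.univ

/-- An action of `G` on a measure space is *pointwise free* if the set of points fixed by some
non-identity element has measure zero. -/
def PointwiseFree (G : Type*) {X : Type*} [Group G] [MulAction G X] [MeasurableSpace X]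
    (μ : Measure X) : Prop :=
  μ {x : X | ∃ g : G, g ≠ 1 ∧ g • x = x} = 0

/-- a non-singular action of a countable group admitting arbitrarily
invariant tiling families, and satisfying the decomposition property of the Ornstein–Weiss
theorem for all data, is pointwise free. -/
theorem pointwiseFree_of_decomposition {G X : Type*} [Group G] [Countable G] [MulAction G X]
    [MeasurableSpace X] (μ : Measure X) [IsProbabilityMeasure μ]
    (hns : NonSingularAction G μ)
    (hfix : ∀ g : G, MeasurableSet {x : X | g • x = x})
    (htile : ∀ K : Finset G, ∀ δ : ℝ, 0 < δ →
      ∃ (𝒯 : Finset (Finset G)) (C : Finset G → Set G),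
        IsTilingFamily 𝒯 C ∧ ∀ T ∈ 𝒯, KInvariant K δ T)
    (hdec : ∀ ε δ : ℝ, 0 < ε → ε < 1 → 0 < δ → δ < ε ^ 3 / 250 →
      ∀ K : Finset G, (∀ k ∈ K, k⁻¹ ∈ K) → (1 : G) ∈ K →
      ∀ (𝒯 : Finset (Finset G)) (C : Finset G → Set G), IsTilingFamily 𝒯 C →
      (∀ T ∈ 𝒯, KInvariant K δ T) →
      ∃ W : Finset G → Set X,
        (∀ T ∈ 𝒯, MeasurableSet (W T) ∧ IsHSet μ (T : Set G) (W T)) ∧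
        (∀ T₁ ∈ 𝒯, ∀ T₂ ∈ 𝒯, T₁ ≠ T₂ →
          μ ((⋃ t ∈ T₁, t • W T₁) ∩ ⋃ t ∈ T₂, t • W T₂) = 0) ∧
        ENNReal.ofReal (1 - ε) < μ (⋃ T ∈ 𝒯, ⋃ t ∈ T, t • W T) ∧
        ∑ T ∈ 𝒯, μ (⋃ g ∈ kBoundary (K : Set G) (T : Set G), g • W T) < ENNReal.ofReal ε) :
    PointwiseFree G μ := by
  classical
  have key : ∀ g : G, g ≠ 1 → μ {x : X | g • x = x} = 0 := by
    intro g hg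
    have hb : ∀ ε : ℝ, 0 < ε → ε < 1 →
        μ {x : X | g • x = x} ≤ ENNReal.ofReal ε + ENNReal.ofReal ε := by
      intro ε hε hε1
      set K : Finset G := {1, g, g⁻¹} with hK
      have hsym : ∀ k ∈ K, k⁻¹ ∈ K := by
        intro k hk
        simp only [hK, Finset.mem_insert, Finset.mem_singleton] at hk ⊢
        rcases hk with rfl | rfl | rfl <;> simp
      have h1K : (1 : G) ∈ K := by simp [hK]
      have hgK : g ∈ K := by simp [hK]
      have hδpos : 0 < ε ^ 3 / 500 := by positivity
      have hδlt : ε ^ 3 / 500 < ε ^ 3 / 250 := by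
        have h3 : 0 < ε ^ 3 := by positivity
        linarith
      obtain ⟨𝒯, C, hTC, hInv⟩ := htile K (ε ^ 3 / 500) hδpos
      obtain ⟨W, hW, hdisj, hbig, hbdry⟩ :=
        hdec ε (ε ^ 3 / 500) hε hε1 hδpos hδlt K hsym h1K 𝒯 C hTC hInv
      set A : Set X := ⋃ T ∈ 𝒯, ⋃ t ∈ T, t • W T with hA
      have hmeas_smul : ∀ (t : G) (S : Set X), MeasurableSet S → MeasurableSet (t • S) := by
        intro t S hS
        have hEq : t • S = (fun x : X => t⁻¹ • x) ⁻¹' S := by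
          ext x
          simp [Set.mem_smul_set_iff_inv_smul_mem]
        rw [hEq]
        exact hS.preimage (hns.1 t⁻¹)
      have hAmeas : MeasurableSet A := by
        refine Finset.measurableSet_biUnion _ fun T hT => ?_
        exact Finset.measurableSet_biUnion _ fun t ht => hmeas_smul t (W T) (hW T hT).1
      set N : Set X := ⋃ T ∈ 𝒯, ⋃ t ∈ T, ⋃ t' ∈ T.erase t, (t • W T ∩ t' • W T) with hNdef
      have hN0 : μ N = 0 := by
        refine le_antisymm ?_ zero_le
        calc μ N ≤ ∑ T ∈ 𝒯, μ (⋃ t ∈ T, ⋃ t' ∈ T.erase t, (t • W T ∩ t' • W T)) :=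
              measure_biUnion_finset_le _ _
          _ = 0 := by
              refine Finset.sum_eq_zero fun T hT => ?_
              refine le_antisymm ?_ zero_le
              calc μ (⋃ t ∈ T, ⋃ t' ∈ T.erase t, (t • W T ∩ t' • W T))
                    ≤ ∑ t ∈ T, μ (⋃ t' ∈ T.erase t, (t • W T ∩ t' • W T)) :=
                      measure_biUnion_finset_le _ _
                _ ≤ ∑ t ∈ T, ∑ t' ∈ T.erase t, μ (t • W T ∩ t' • W T) :=
                      Finset.sum_le_sum fun t ht => measure_biUnion_finset_le _ _
                _ = 0 := by
                      refine Finset.sum_eq_zero fun t ht => Finset.sum_eq_zero fun t' ht' => ?_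
                      obtain ⟨hne, ht'T⟩ := Finset.mem_erase.mp ht'
                      exact (hW T hT).2 t (Finset.mem_coe.mpr ht) t' (Finset.mem_coe.mpr ht'T)
                        (Ne.symm hne)
      set B : Set X := ⋃ T ∈ 𝒯, ⋃ b ∈ kBoundary (K : Set G) (T : Set G), b • W T with hBdef
      have hB : μ B ≤ ENNReal.ofReal ε := by
        calc μ B ≤ ∑ T ∈ 𝒯, μ (⋃ b ∈ kBoundary (K : Set G) (T : Set G), b • W T) :=
              measure_biUnion_finset_le _ _
          _ ≤ ENNReal.ofReal ε := hbdry.le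
      have hsub : {x : X | g • x = x} ⊆ Aᶜ ∪ (N ∪ B) := by
        intro x hx
        by_cases hxA : x ∈ A
        · right
          simp only [hA, Set.mem_iUnion] at hxA
          obtain ⟨T, hT, t, ht, w, hw, rfl⟩ := hxA
          have hgx : g • (t • w) = t • w := hx
          have hx' : (g * t) • w = t • w := by rw [mul_smul]; exact hgx
          by_cases hgt : g * t ∈ T
          · left
            have hne : g * t ≠ t := by
              intro h
              exact hg (by simpa using mul_right_cancel (h.trans (one_mul t).symm))
            simp only [hNdef, Set.mem_iUnion]
            exact ⟨T, hT, t, ht, g * t, Finset.mem_erase.mpr ⟨hne, hgt⟩,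
              ⟨w, hw, rfl⟩, ⟨w, hw, hx'⟩⟩
          · right
            have hbd : t ∈ kBoundary (K : Set G) (T : Set G) := by
              refine ⟨⟨1, by exact_mod_cast h1K, ?_⟩, ⟨g, by exact_mod_cast hgK, ?_⟩⟩
              · simpa using (Finset.mem_coe.mpr ht)
              · simpa using hgt
            simp only [hBdef, Set.mem_iUnion]
            exact ⟨T, hT, t, hbd, ⟨w, hw, rfl⟩⟩
        · left; exact hxA
      have hAc : μ Aᶜ ≤ ENNReal.ofReal ε := by
        rw [prob_compl_eq_one_sub hAmeas]
        calc (1 : ℝ≥0∞) - μ A ≤ 1 - ENNReal.ofReal (1 - ε) := tsub_le_tsub_left hbig.le 1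
          _ = ENNReal.ofReal ε := by
              rw [show (1 : ℝ≥0∞) = ENNReal.ofReal 1 by simp,
                ← ENNReal.ofReal_sub 1 (by linarith)]
              norm_num
      calc μ {x : X | g • x = x} ≤ μ (Aᶜ ∪ (N ∪ B)) := measure_mono hsub
        _ ≤ μ Aᶜ + μ (N ∪ B) := measure_union_le _ _
        _ ≤ μ Aᶜ + (μ N + μ B) := add_le_add le_rfl (measure_union_le _ _)
        _ ≤ ENNReal.ofReal ε + (0 + ENNReal.ofReal ε) :=
              add_le_add hAc (add_le_add hN0.le hB)
        _ = ENNReal.ofReal ε + ENNReal.ofReal ε := by rw [zero_add]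
    refine le_antisymm ?_ zero_le
    refine ENNReal.le_of_forall_pos_le_add fun ε' hε' _ => ?_
    set r : ℝ := min ((ε' : ℝ) / 2) (1 / 2) with hr
    have hε'0 : (0 : ℝ) < ε' := hε'
    have hr0 : 0 < r := lt_min (by linarith) (by norm_num)
    have hr1 : r < 1 := lt_of_le_of_lt (min_le_right _ _) (by norm_num)
    calc μ {x : X | g • x = x} ≤ ENNReal.ofReal r + ENNReal.ofReal r := hb r hr0 hr1
      _ = ENNReal.ofReal (r + r) := (ENNReal.ofReal_add hr0.le hr0.le).symm
      _ ≤ ENNReal.ofReal (ε' : ℝ) := by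
          refine ENNReal.ofReal_le_ofReal ?_
          have := min_le_left ((ε' : ℝ) / 2) (1 / 2)
          linarith
      _ = (ε' : ℝ≥0∞) := ENNReal.ofReal_coe_nnreal
      _ = 0 + ε' := (zero_add _).symm
  have hEq : {x : X | ∃ g : G, g ≠ 1 ∧ g • x = x} = ⋃ g : G, {x : X | g ≠ 1 ∧ g • x = x} := by
    ext x; simp
  rw [PointwiseFree, hEq]
  refine measure_iUnion_null fun g => ?_
  by_cases hg : g = 1
  · simp [hg]
  · exact measure_mono_null (fun x hx => hx.2) (key g hg)
end
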